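/- A polynomial g ∈ MvPolynomial (Fin 2) ℝ satisfies σ(g) = g if and only if g lies in the ℝ-subalgebra generated by the single element (α² + α*β − β²)²; that is, the fixed ring of σ on ℝ[α, β] is Algebra.adjoin ℝ {(α² + α*β − β²)²}. -/
import Mathlib

open MvPolynomial

noncomputable section FibAux

namespace FibAux

def φ : ℝ := (1 + Real.sqrt 5) / 2
def ψ : ℝ := (1 - Real.sqrt 5) / 2

lemma s5 : Real.sqrt 5 ^ 2 = 5 := Real.sq_sqrt (by norm_num)

lemma s5_gt : 2 < Real.sqrt 5 := by
  nlinarith [s5, Real.sqrt_nonneg 5]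

lemma hsum : φ + ψ = 1 := by unfold φ ψ; ring

lemma hprod : φ * ψ = -1 := by unfold φ ψ; nlinarith [s5]

lemma hφ_gt : 1 < φ := by unfold φ; nlinarith [s5_gt]

lemma hψ_neg : ψ < 0 := by unfold ψ; nlinarith [s5_gt]

lemma hφsq : φ * φ = φ + 1 := by unfold φ; nlinarith [s5]

lemma hψsq : ψ * ψ = ψ + 1 := by unfold ψ; nlinarith [s5]

lemma hφψne : ψ - φ ≠ 0 := by
  have h1 := hφ_gt; have h2 := hψ_neg
  intro h; have := sub_eq_zero.1 h; linarith

lemma key (a b : ℕ) (h : φ ^ a * ψ ^ b = 1) : a = b ∧ Even b := by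
  have hφ0 : (0:ℝ) < φ := lt_trans one_pos hφ_gt
  have hnψ : -ψ = φ⁻¹ := by
    have := hprod
    field_simp
    nlinarith [hprod]
  have habs : φ ^ a * (-ψ) ^ b = 1 := by
    have := congrArg abs h
    rw [abs_mul, abs_pow, abs_pow, abs_of_pos hφ0, abs_of_neg hψ_neg, abs_one] at this
    exact this
  have hpow : φ ^ a = φ ^ b := by
    rw [hnψ, inv_pow] at habs
    have hb : (0:ℝ) < φ ^ b := pow_pos hφ0 b
    field_simp at habs
    linarith [habs]
  have hab : a = b := by
    rcases lt_trichotomy a b with hlt | heq | hgt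
    · exact absurd hpow (ne_of_lt (pow_lt_pow_right₀ hφ_gt hlt))
    · exact heq
    · exact absurd hpow.symm (ne_of_lt (pow_lt_pow_right₀ hφ_gt hgt))
  subst hab
  have hm : ((-1:ℝ)) ^ a = 1 := by rw [← hprod, mul_pow]; exact h
  refine ⟨rfl, ?_⟩
  rcases Nat.even_or_odd a with he | ho
  · exact he
  · rw [Odd.neg_one_pow ho] at hm; norm_num at hm

abbrev R := MvPolynomial (Fin 2) ℝ

lemma mono_eq (v : Fin 2 →₀ ℕ) (a : ℝ) :
    (monomial v a : R) = C a * X 0 ^ v 0 * X 1 ^ v 1 := by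
  rw [monomial_eq, Finsupp.prod_fintype _ _ (fun i => pow_zero _), Fin.prod_univ_two, mul_assoc]

def d : R →ₐ[ℝ] R := aeval ![C φ * X 0, C ψ * X 1]

lemma d_monomial (v : Fin 2 →₀ ℕ) (a : ℝ) :
    d (monomial v a) = monomial v (φ ^ v 0 * ψ ^ v 1 * a) := by
  rw [d, aeval_monomial, Finsupp.prod_fintype _ _ (fun i => pow_zero _), Fin.prod_univ_two,
    mono_eq]
  simp only [Matrix.cons_val_zero, Matrix.cons_val_one, Matrix.head_cons, algebraMap_eq,
    mul_pow, ← C_pow, C_mul]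
  ring

lemma coeff_d (g : R) (t : Fin 2 →₀ ℕ) :
    coeff t (d g) = φ ^ t 0 * ψ ^ t 1 * coeff t g := by
  have e1 : d g = ∑ v ∈ g.support, monomial v (φ ^ v 0 * ψ ^ v 1 * coeff v g) := by
    conv_lhs => rw [g.as_sum]
    rw [map_sum]
    simp only [d_monomial]
  rw [e1, coeff_sum]
  simp only [coeff_monomial]
  rw [Finset.sum_ite_eq' g.support t (fun v => φ ^ v 0 * ψ ^ v 1 * coeff v g)]
  split_ifs with h
  · rfl
  · rw [notMem_support_iff.1 h, mul_zero]

lemma d_fixed {h : R} (hf : d h = h) :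
    h ∈ Algebra.adjoin ℝ ({(X 0 * X 1 : R) ^ 2} : Set R) := by
  have hcoef : ∀ t ∈ h.support, ∃ k, t 0 = 2 * k ∧ t 1 = 2 * k := by
    intro t ht
    have h1 := coeff_d h t
    rw [hf] at h1
    have h2 : coeff t h ≠ 0 := mem_support_iff.1 ht
    have h3 : φ ^ t 0 * ψ ^ t 1 = 1 :=
      mul_right_cancel₀ h2 (h1.symm.trans (one_mul (coeff t h)).symm)
    obtain ⟨heq, k, hk⟩ := key _ _ h3
    exact ⟨k, by omega, by omega⟩
  rw [h.as_sum]
  refine Subalgebra.sum_mem _ (fun t ht => ?_)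
  obtain ⟨k, h0, h1⟩ := hcoef t ht
  rw [mono_eq, h0, h1]
  have he : (X 0 : R) ^ (2 * k) * X 1 ^ (2 * k) = ((X 0 * X 1) ^ 2) ^ k := by ring
  rw [mul_assoc, he]
  apply mul_mem
  · exact Subalgebra.algebraMap_mem _ _
  · exact pow_mem (Algebra.subset_adjoin (Set.mem_singleton _)) k

-- inverse-matrix coefficients
def ca : ℝ := ψ / (ψ - φ)
def cb : ℝ := -φ / (ψ - φ)
def cc : ℝ := -1 / (ψ - φ)
def ce : ℝ := 1 / (ψ - φ)

def τ : R →ₐ[ℝ] R := aeval ![X 0 + C φ * X 1, X 0 + C ψ * X 1]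

def τ' : R →ₐ[ℝ] R := aeval ![C ca * X 0 + C cb * X 1, C cc * X 0 + C ce * X 1]

-- relations in ℝ
lemma r_ab : ca + cb = 1 := by unfold ca cb; field_simp [hφψne]; try ring
lemma r_ab' : ca * φ + cb * ψ = 0 := by unfold ca cb; field_simp [hφψne]; ring
lemma r_ce : cc + ce = 0 := by unfold cc ce; field_simp [hφψne]; try ring
lemma r_ce' : cc * φ + ce * ψ = 1 := by unfold cc ce; field_simp [hφψne]; try ring
lemma r_ac : ca + φ * cc = 1 := by unfold ca cc; field_simp [hφψne]; try ring
lemma r_be : cb + φ * ce = 0 := by unfold cb ce; field_simp [hφψne]; try ring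
lemma r_ac' : ca + ψ * cc = 0 := by unfold ca cc; field_simp [hφψne]; try ring
lemma r_be' : cb + ψ * ce = 1 := by unfold cb ce; field_simp [hφψne]; try ring

-- lift an ℝ-identity to a C-identity in R
lemma liftC {x y : ℝ} (hxy : x = y) : (C x : R) = C y := congrArg _ hxy

lemma ττ' : ∀ x : R, τ (τ' x) = x := by
  have h : τ.comp τ' = AlgHom.id ℝ R := by
    apply MvPolynomial.algHom_ext
    intro i
    have hab : (C ca : R) + C cb = 1 := by rw [← C_add, r_ab, C_1]
    have hab' : (C ca : R) * C φ + C cb * C ψ = 0 := by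
      rw [← C_mul, ← C_mul, ← C_add, r_ab', C_0]
    have hce : (C cc : R) + C ce = 0 := by rw [← C_add, r_ce, C_0]
    have hce' : (C cc : R) * C φ + C ce * C ψ = 1 := by
      rw [← C_mul, ← C_mul, ← C_add, r_ce', C_1]
    fin_cases i <;>
      simp only [AlgHom.comp_apply, AlgHom.id_apply, τ, τ', aeval_X, map_add, map_mul, aeval_C,
        algebraMap_eq, Matrix.cons_val_zero, Matrix.cons_val_one, Matrix.head_cons,
        Fin.isValue, Fin.zero_eta, Fin.mk_one]
    · linear_combination (X 0 : R) * hab + (X 1 : R) * hab'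
    · linear_combination (X 0 : R) * hce + (X 1 : R) * hce'
  exact fun x => congrFun (congrArg DFunLike.coe h) x

lemma τ'τ : ∀ x : R, τ' (τ x) = x := by
  have h : τ'.comp τ = AlgHom.id ℝ R := by
    apply MvPolynomial.algHom_ext
    intro i
    have hac : (C ca : R) + C φ * C cc = 1 := by rw [← C_mul, ← C_add, r_ac, C_1]
    have hbe : (C cb : R) + C φ * C ce = 0 := by rw [← C_mul, ← C_add, r_be, C_0]
    have hac' : (C ca : R) + C ψ * C cc = 0 := by rw [← C_mul, ← C_add, r_ac', C_0]
    have hbe' : (C cb : R) + C ψ * C ce = 1 := by rw [← C_mul, ← C_add, r_be', C_1]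
    fin_cases i <;>
      simp only [AlgHom.comp_apply, AlgHom.id_apply, τ, τ', aeval_X, map_add, map_mul, aeval_C,
        algebraMap_eq, Matrix.cons_val_zero, Matrix.cons_val_one, Matrix.head_cons,
        Fin.isValue, Fin.zero_eta, Fin.mk_one]
    · linear_combination (X 0 : R) * hac + (X 1 : R) * hbe
    · linear_combination (X 0 : R) * hac' + (X 1 : R) * hbe'
  exact fun x => congrFun (congrArg DFunLike.coe h) x

end FibAux

end FibAux

open FibAux in
theorem fibonacci_fixed_ring
    (σ : MvPolynomial (Fin 2) ℝ →ₐ[ℝ] MvPolynomial (Fin 2) ℝ)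
    (hσα : σ (X 0) = X 1)
    (hσβ : σ (X 1) = X 0 + X 1)
    (g : MvPolynomial (Fin 2) ℝ) :
    σ g = g ↔
      g ∈ Algebra.adjoin ℝ
        ({((X 0) ^ 2 + X 0 * X 1 - (X 1) ^ 2) ^ 2} : Set (MvPolynomial (Fin 2) ℝ)) := by
  have hσD : σ (((X 0) ^ 2 + X 0 * X 1 - (X 1) ^ 2) ^ 2) =
      ((X 0) ^ 2 + X 0 * X 1 - (X 1) ^ 2) ^ 2 := by
    simp only [map_pow, map_sub, map_add, map_mul, hσα, hσβ]
    ring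
  constructor
  · -- hard direction
    intro hfix
    -- conjugation: σ ∘ τ = τ ∘ d
    have hconj : σ.comp τ = τ.comp d := by
      apply MvPolynomial.algHom_ext
      intro i
      have hσC : ∀ r : ℝ, σ (C r) = C r := fun r => by
        rw [← algebraMap_eq]; exact σ.commutes r
      have hφ2 : (C φ : R) * C φ = C φ + 1 := by rw [← C_mul, hφsq, C_add, C_1]
      have hψ2 : (C ψ : R) * C ψ = C ψ + 1 := by rw [← C_mul, hψsq, C_add, C_1]
      fin_cases i <;>
        simp only [AlgHom.comp_apply, τ, d, aeval_X, map_add, map_mul, aeval_C,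
          algebraMap_eq, Matrix.cons_val_zero, Matrix.cons_val_one, Matrix.head_cons,
          Fin.isValue, Fin.zero_eta, Fin.mk_one, hσα, hσβ, hσC]
      · linear_combination (-(X 1 : R)) * hφ2
      · linear_combination (-(X 1 : R)) * hψ2
    set h : R := τ' g with hh
    have hg : τ h = g := ττ' g
    have hdh : d h = h := by
      have h1 : τ (d h) = τ h := by
        have := congrFun (congrArg DFunLike.coe hconj) h
        simp only [AlgHom.comp_apply] at this
        rw [← this, hg]; exact hfix
      have := congrArg τ' h1
      rwa [τ'τ, τ'τ] at this
    have hmem : h ∈ Algebra.adjoin ℝ ({(X 0 * X 1 : R) ^ 2} : Set R) := d_fixed hdh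
    have hτD : τ ((X 0 * X 1 : R) ^ 2) =
        ((X 0) ^ 2 + X 0 * X 1 - (X 1) ^ 2) ^ 2 := by
      have hs : (C φ : R) + C ψ = 1 := by rw [← C_add, hsum, C_1]
      have hp : (C φ : R) * C ψ = -1 := by rw [← C_mul, hprod]; simp
      simp only [τ, map_pow, map_mul, aeval_X, Matrix.cons_val_zero, Matrix.cons_val_one,
        Matrix.head_cons]
      linear_combination (((X 0 + C φ * X 1) * (X 0 + C ψ * X 1)) +
          ((X 0:R) ^ 2 + X 0 * X 1 - (X 1) ^ 2)) * ((X 0 : R) * X 1 * hs + (X 1:R) ^ 2 * hp)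
    have := Subalgebra.mem_map.2 ⟨h, hmem, hg⟩
    rw [AlgHom.map_adjoin, Set.image_singleton, hτD] at this
    exact this
  · intro hmem
    induction hmem using Algebra.adjoin_induction with
    | mem x hx => rw [Set.mem_singleton_iff.1 hx]; exact hσD
    | algebraMap r => exact σ.commutes r
    | add x y _ _ hx hy => rw [map_add, hx, hy]
    | mul x y _ _ hx hy => rw [map_mul, hx, hy]
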